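/- Let A be a positive self-adjoint operator on a Hilbert space H and J : H → K a bounded operator into a Hilbert space K such that J*A^{-1}J is invertible. Then J*J (J* A^{-1} J)^{-1} J*J ≤ J* A J as quadratic forms. -/

import Mathlib

open ContinuousLinearMap

/-- If `A` is a positive invertible self-adjoint operator on a Hilbert
space `K` (with inverse `B`), `J : H → K` is bounded, and `J* A⁻¹ J` is invertible (with
inverse `C`), then `J*J (J* A⁻¹ J)⁻¹ J*J ≤ J* A J` as quadratic forms. -/
theorem stmt0 {H K : Type*}
    [NormedAddCommGroup H] [InnerProductSpace ℂ H] [CompleteSpace H]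
    [NormedAddCommGroup K] [InnerProductSpace ℂ K] [CompleteSpace K]
    (A B : K →L[ℂ] K) (J : H →L[ℂ] K) (C : H →L[ℂ] H)
    (hA : A.IsPositive)
    (hAB : A ∘L B = 1) (hBA : B ∘L A = 1)
    (hC1 : ((adjoint J) ∘L B ∘L J) ∘L C = 1)
    (hC2 : C ∘L ((adjoint J) ∘L B ∘L J) = 1) :
    ((adjoint J) ∘L A ∘L J
      - ((adjoint J) ∘L J) ∘L C ∘L ((adjoint J) ∘L J)).IsPositive := by
  have hA' : adjoint A = A := isSelfAdjoint_iff'.mp hA.isSelfAdjoint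
  have hB : adjoint B = B := by
    have h1 : adjoint B ∘L A = 1 := by
      have : adjoint B ∘L A = adjoint (A ∘L B) := by rw [adjoint_comp, hA']
      rw [this, hAB]; simp [one_def, adjoint_id]
    calc adjoint B = adjoint B ∘L (A ∘L B) := by rw [hAB]; simp [one_def]
    _ = (adjoint B ∘L A) ∘L B := by rw [← comp_assoc]
    _ = B := by rw [h1]; simp [one_def]
  have hM' : adjoint ((adjoint J) ∘L B ∘L J) = (adjoint J) ∘L B ∘L J := by
    rw [adjoint_comp, adjoint_comp, adjoint_adjoint, hB, comp_assoc]
  have hC : adjoint C = C := by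
    have h1 : adjoint C ∘L ((adjoint J) ∘L B ∘L J) = 1 := by
      rw [← hM', ← adjoint_comp, hC1]; simp [one_def, adjoint_id]
    calc adjoint C = adjoint C ∘L (((adjoint J) ∘L B ∘L J) ∘L C) := by
          rw [hC1]; simp [one_def]
    _ = (adjoint C ∘L ((adjoint J) ∘L B ∘L J)) ∘L C := by rw [← comp_assoc]
    _ = C := by rw [h1]; simp [one_def]
  refine isPositive_def'.mpr ⟨?_, ?_⟩
  · rw [isSelfAdjoint_iff', map_sub]
    congr 1
    · rw [adjoint_comp, adjoint_comp, adjoint_adjoint, hA', comp_assoc]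
    · rw [adjoint_comp, adjoint_comp, adjoint_comp, adjoint_adjoint, hC,
        comp_assoc]
  · intro x
    set c : H := C ((adjoint J) (J x)) with hc
    set u : K := J x - B (J c) with hu
    have hABapp : ∀ y : K, A (B y) = y := fun y => by
      have := congrArg (fun T : K →L[ℂ] K => T y) hAB
      simpa using this
    have hMc : (adjoint J) (B (J c)) = (adjoint J) (J x) := by
      have := congrArg (fun T : H →L[ℂ] H => T ((adjoint J) (J x))) hC1
      simpa [hc] using this
    have hterm : (inner ℂ (J c) (B (J c)) : ℂ) = inner ℂ (J c) (J x) := by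
      rw [← adjoint_inner_right J, hMc, adjoint_inner_right]
    have key : (inner ℂ (A u) u : ℂ)
        = inner ℂ (A (J x)) (J x) - inner ℂ (J x) (J c) := by
      rw [hu, map_sub, inner_sub_left, inner_sub_right, inner_sub_right,
        hABapp]
      have h2 : (inner ℂ (A (J x)) (B (J c)) : ℂ) = inner ℂ (J x) (J c) := by
        rw [← hA', adjoint_inner_left, hABapp]
      rw [h2, hterm]
      ring
    have htarget : (inner ℂ ((((adjoint J) ∘L A ∘L J)
        - ((adjoint J) ∘L J) ∘L C ∘L ((adjoint J) ∘L J)) x) x : ℂ)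
        = inner ℂ (A (J x)) (J x) - inner ℂ (J c) (J x) := by
      simp only [sub_apply, comp_apply, inner_sub_left]
      rw [adjoint_inner_left, adjoint_inner_left, ← hc]
    have hre : ((((adjoint J) ∘L A ∘L J)
        - ((adjoint J) ∘L J) ∘L C ∘L ((adjoint J) ∘L J))).reApplyInnerSelf x
        = A.reApplyInnerSelf u := by
      simp only [reApplyInnerSelf_apply, htarget, key, map_sub]
      congr 1
      rw [← inner_conj_symm (J x) (J c)]
      exact (Complex.conj_re _).symm
    rw [hre]
    exact hA.2 u
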